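/- Let Γ ⊆ ℕ² be a finite set that contains a point of the form (a,0) and a point of the form (0,b), let I ⊆ ℂ[z₁,z₂] be the ideal generated by the monomials with exponents in Γ, let Γ̄ := conv(ℝ≥0² + Γ) ∩ ℕ², and let J ⊆ ℂ[z₁,z₂] be the ideal generated by the monomials with exponents in Γ̄ (so I ⊆ J). Then there exists a constant C > 0 such that for every integer k ≥ 1, 0 ≤ dim_ℂ( ℂ[z₁,z₂]/I^k ) − dim_ℂ( ℂ[z₁,z₂]/J^k ) ≤ C·k. -/

import Mathlib

open Pointwise MeasureTheory

noncomputable section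

/-- The closed first quadrant in `ℝ²`. -/
def quadrant : Set (ℝ × ℝ) := {p | 0 ≤ p.1 ∧ 0 ≤ p.2}

/-- The embedding of `ℕ²` into `ℝ²`. -/
def toR2 (γ : ℕ × ℕ) : ℝ × ℝ := ((γ.1 : ℝ), (γ.2 : ℝ))

/-- The monomial ideal of `ℂ[z₁,z₂]` generated by the monomials with exponents in a set
`S ⊆ ℕ²`. -/
def monomialIdealOfSet (S : Set (ℕ × ℕ)) : Ideal (MvPolynomial (Fin 2) ℂ) :=
  Ideal.span ((fun γ : ℕ × ℕ => MvPolynomial.X 0 ^ γ.1 * MvPolynomial.X 1 ^ γ.2) '' S)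

/-- `Γ̄ := conv(ℝ≥0² + Γ) ∩ ℕ²`, the saturation of the exponent set `Γ`. -/
def saturation (Γ : Finset (ℕ × ℕ)) : Set (ℕ × ℕ) :=
  {γ : ℕ × ℕ | toR2 γ ∈ closure (convexHull ℝ (quadrant + toR2 '' (Γ : Set (ℕ × ℕ))))}


namespace DIC
open MvPolynomial

def d (γ : ℕ × ℕ) : Fin 2 →₀ ℕ := Finsupp.single 0 γ.1 + Finsupp.single 1 γ.2

lemma d_apply0 (γ : ℕ × ℕ) : d γ 0 = γ.1 := by simp [d]
lemma d_apply1 (γ : ℕ × ℕ) : d γ 1 = γ.2 := by simp [d]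

lemma d_add (γ δ : ℕ × ℕ) : d (γ + δ) = d γ + d δ := by
  ext i; fin_cases i <;> simp [d_apply0, d_apply1, Finsupp.add_apply, d]

lemma d_surj (m : Fin 2 →₀ ℕ) : d (m 0, m 1) = m := by
  ext i; fin_cases i <;> simp [d_apply0, d_apply1]

lemma d_le_iff {γ x : ℕ × ℕ} : d γ ≤ d x ↔ γ ≤ x := by
  constructor
  · intro h
    exact ⟨by simpa [d_apply0] using h 0, by simpa [d_apply1] using h 1⟩
  · intro h i
    fin_cases i
    · simpa [d_apply0] using h.1
    · simpa [d_apply1] using h.2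

lemma d_inj : Function.Injective d := by
  intro x y h
  have h0 := congrArg (fun f : Fin 2 →₀ ℕ => f 0) h
  have h1 := congrArg (fun f : Fin 2 →₀ ℕ => f 1) h
  simp only [d_apply0, d_apply1] at h0 h1
  exact Prod.ext h0 h1

lemma monomial_d (γ : ℕ × ℕ) :
    (MvPolynomial.X 0 ^ γ.1 * MvPolynomial.X 1 ^ γ.2 : MvPolynomial (Fin 2) ℂ)
      = monomial (d γ) 1 := by
  rw [X_pow_eq_monomial, X_pow_eq_monomial, monomial_mul, one_mul, d]

lemma monomialIdealOfSet_eq (S : Set (ℕ × ℕ)) :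
    monomialIdealOfSet S = Ideal.span ((fun m => monomial m (1:ℂ)) '' (d '' S)) := by
  unfold monomialIdealOfSet
  rw [Set.image_image]
  congr 1
  ext p
  simp only [Set.mem_image]
  exact ⟨fun ⟨γ, hγ, h⟩ => ⟨γ, hγ, by rw [← h, monomial_d]⟩,
    fun ⟨γ, hγ, h⟩ => ⟨γ, hγ, by rw [monomial_d]; exact h⟩⟩

lemma mem_monomialIdealOfSet {S : Set (ℕ × ℕ)} {p : MvPolynomial (Fin 2) ℂ} :
    p ∈ monomialIdealOfSet S ↔ ∀ m ∈ p.support, ∃ γ ∈ S, d γ ≤ m := by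
  rw [monomialIdealOfSet_eq, mem_ideal_span_monomial_image]
  constructor
  · intro h m hm
    obtain ⟨si, hsi, hle⟩ := h m hm
    obtain ⟨γ, hγ, rfl⟩ := hsi
    exact ⟨γ, hγ, hle⟩
  · intro h m hm
    obtain ⟨γ, hγ, hle⟩ := h m hm
    exact ⟨d γ, ⟨γ, hγ, rfl⟩, hle⟩

lemma monomialIdealOfSet_mul (S T : Set (ℕ × ℕ)) :
    monomialIdealOfSet S * monomialIdealOfSet T = monomialIdealOfSet (S + T) := by
  unfold monomialIdealOfSet
  rw [Ideal.span_mul_span]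
  congr 1
  apply Set.Subset.antisymm
  · intro p hp
    rw [Set.mem_mul] at hp
    obtain ⟨x, hx, y, hy, rfl⟩ := hp
    obtain ⟨γ, hγ, rfl⟩ := hx
    obtain ⟨δ, hδ, rfl⟩ := hy
    refine ⟨γ + δ, Set.add_mem_add hγ hδ, ?_⟩
    simp only [monomial_d, monomial_mul, one_mul, d_add]
  · intro p hp
    obtain ⟨z, hz, rfl⟩ := hp
    rw [Set.mem_add] at hz
    obtain ⟨γ, hγ, δ, hδ, rfl⟩ := hz
    rw [Set.mem_mul]
    refine ⟨_, ⟨γ, hγ, rfl⟩, _, ⟨δ, hδ, rfl⟩, ?_⟩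
    simp only [monomial_d, monomial_mul, one_mul, d_add]

def sumPow (S : Set (ℕ × ℕ)) : ℕ → Set (ℕ × ℕ)
  | 0 => {0}
  | k+1 => S + sumPow S k

lemma monomialIdealOfSet_pow (S : Set (ℕ × ℕ)) (k : ℕ) :
    monomialIdealOfSet S ^ k = monomialIdealOfSet (sumPow S k) := by
  induction k with
  | zero =>
    simp only [pow_zero, sumPow]
    rw [Ideal.one_eq_top]
    symm
    rw [Ideal.eq_top_iff_one]
    unfold monomialIdealOfSet
    apply Ideal.subset_span
    exact ⟨0, rfl, by simp⟩
  | succ k ih =>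
    rw [pow_succ, ih, mul_comm, monomialIdealOfSet_mul]
    rfl

end DIC

namespace DIC
open MvPolynomial

def upset (S : Set (ℕ × ℕ)) : Set (ℕ × ℕ) := {x | ∃ γ ∈ S, γ ≤ x}

abbrev Rp := MvPolynomial (Fin 2) ℂ

def coeffMap (F : Finset (ℕ × ℕ)) : Rp →ₗ[ℂ] (F → ℂ) :=
  LinearMap.pi fun x => lcoeff ℂ (d x.1)

lemma coeffMap_surj (F : Finset (ℕ × ℕ)) : Function.Surjective (coeffMap F) := by
  intro g
  refine ⟨∑ x ∈ F.attach, monomial (d x.1) (g x), ?_⟩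
  funext y
  simp only [coeffMap, LinearMap.pi_apply, lcoeff_apply, coeff_sum, coeff_monomial]
  rw [Finset.sum_eq_single y]
  · simp
  · intro x _ hxy
    rw [if_neg]
    intro h
    exact hxy (Subtype.ext (d_inj h))
  · intro h
    exact absurd (Finset.mem_attach F y) h

lemma coeffMap_ker (S : Set (ℕ × ℕ)) (F : Finset (ℕ × ℕ)) (hF : ↑F = (upset S)ᶜ) :
    LinearMap.ker (coeffMap F) = (monomialIdealOfSet S).restrictScalars ℂ := by
  ext p
  simp only [LinearMap.mem_ker, Submodule.restrictScalars_mem, mem_monomialIdealOfSet]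
  constructor
  · intro h m hm
    by_contra hcon
    push_neg at hcon
    have hx : (m 0, m 1) ∉ upset S := by
      rintro ⟨γ, hγ, hle⟩
      exact absurd (d_le_iff.2 hle) (by rw [d_surj]; exact fun hh => (hcon γ hγ) hh)
    have hxF : (m 0, m 1) ∈ F := by
      rw [← Finset.mem_coe, hF]; exact hx
    have := congrFun h ⟨(m 0, m 1), hxF⟩
    simp only [coeffMap, LinearMap.pi_apply, lcoeff_apply, Pi.zero_apply, d_surj] at this
    exact (mem_support_iff.mp hm) this
  · intro h
    funext x
    simp only [coeffMap, LinearMap.pi_apply, lcoeff_apply, Pi.zero_apply]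
    by_contra hc
    have hmem : d x.1 ∈ p.support := mem_support_iff.mpr hc
    obtain ⟨γ, hγ, hle⟩ := h _ hmem
    have : (x : ℕ × ℕ) ∈ upset S := ⟨γ, hγ, d_le_iff.1 hle⟩
    have hx := x.2
    rw [← Finset.mem_coe, hF] at hx
    exact hx this

lemma mk_ker (I : Ideal Rp) :
    LinearMap.ker (Ideal.Quotient.mkₐ ℂ I).toLinearMap = I.restrictScalars ℂ := by
  ext p
  simp only [LinearMap.mem_ker, AlgHom.toLinearMap_apply, Ideal.Quotient.mkₐ_eq_mk,
    Submodule.restrictScalars_mem]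
  exact Ideal.Quotient.eq_zero_iff_mem

lemma finrank_quotient (S : Set (ℕ × ℕ)) (F : Finset (ℕ × ℕ)) (hF : ↑F = (upset S)ᶜ) :
    Module.finrank ℂ (Rp ⧸ monomialIdealOfSet S) = F.card := by
  set I := monomialIdealOfSet S with hI
  set f := (Ideal.Quotient.mkₐ ℂ I).toLinearMap with hf
  have hs : Function.Surjective f := by
    intro y
    obtain ⟨x, hx⟩ := Ideal.Quotient.mk_surjective (I := I) y
    exact ⟨x, hx⟩
  have h1 : LinearMap.ker f = LinearMap.ker (coeffMap F) := by
    rw [hf, mk_ker, coeffMap_ker S F hF]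
  have e1 := (LinearMap.quotKerEquivOfSurjective f hs).symm
  have e2 := Submodule.quotEquivOfEq _ _ h1
  have e3 := LinearMap.quotKerEquivOfSurjective _ (coeffMap_surj F)
  have := ((e1.trans e2).trans e3).finrank_eq
  rw [this, Module.finrank_pi]
  exact Fintype.card_coe F
end DIC

namespace DIC

lemma toR2_inj : Function.Injective toR2 := by
  intro x y h
  have h1 := congrArg Prod.fst h
  have h2 := congrArg Prod.snd h
  exact Prod.ext (Nat.cast_injective h1) (Nat.cast_injective h2)

lemma sumPow_mono {S T : Set (ℕ × ℕ)} (h : S ⊆ T) (k : ℕ) : sumPow S k ⊆ sumPow T k := by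
  induction k with
  | zero => exact le_refl _
  | succ k ih => exact Set.add_subset_add h ih

lemma smul_mem_sumPow {S : Set (ℕ × ℕ)} {γ : ℕ × ℕ} (h : γ ∈ S) (k : ℕ) :
    k • γ ∈ sumPow S k := by
  induction k with
  | zero => simp [sumPow]
  | succ k ih =>
    have heq : (k + 1) • γ = γ + k • γ := by rw [succ_nsmul, add_comm]
    rw [heq]
    exact Set.add_mem_add h ih

lemma subset_saturation {Γ : Finset (ℕ × ℕ)} : (Γ : Set (ℕ × ℕ)) ⊆ saturation Γ := by
  intro γ hγ
  refine subset_closure (subset_convexHull ℝ _ ?_)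
  have : toR2 γ = 0 + toR2 γ := by rw [zero_add]
  rw [this]
  exact Set.add_mem_add ⟨le_refl 0, le_refl 0⟩ ⟨γ, hγ, rfl⟩

lemma sum_mem_sumPow (Γ : Finset (ℕ × ℕ)) (k : ℕ) (m : ℕ × ℕ → ℕ)
    (hm : ∑ γ ∈ Γ, m γ = k) : ∑ γ ∈ Γ, m γ • γ ∈ sumPow (↑Γ) k := by
  induction k generalizing m with
  | zero =>
    have : ∀ γ ∈ Γ, m γ • γ = 0 := by
      intro γ hγ
      have : m γ = 0 := by
        by_contra h
        have := Finset.sum_eq_zero_iff.mp hm γ hγ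
        exact h this
      rw [this, zero_smul]
    rw [Finset.sum_congr rfl this, Finset.sum_const, smul_zero]
    exact rfl
  | succ k ih =>
    have hpos : ∃ γ0 ∈ Γ, m γ0 ≠ 0 := by
      by_contra h
      push_neg at h
      rw [Finset.sum_eq_zero (fun γ hγ => h γ hγ)] at hm
      exact Nat.succ_ne_zero k hm.symm
    obtain ⟨γ0, hγ0, hm0⟩ := hpos
    set m' : ℕ × ℕ → ℕ := Function.update m γ0 (m γ0 - 1) with hm'
    have hmm' : ∀ γ ∈ Γ.erase γ0, m' γ = m γ := by
      intro γ hγ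
      exact Function.update_of_ne (Finset.ne_of_mem_erase hγ) _ m
    have hs0 : ∑ γ ∈ Γ, m γ = m γ0 + ∑ γ ∈ Γ.erase γ0, m γ :=
      (Finset.add_sum_erase Γ m hγ0).symm
    have hs1 : ∑ γ ∈ Γ, m' γ = m' γ0 + ∑ γ ∈ Γ.erase γ0, m γ := by
      rw [← Finset.add_sum_erase Γ m' hγ0, Finset.sum_congr rfl hmm']
    have hm'0 : m' γ0 = m γ0 - 1 := Function.update_self γ0 _ m
    have hsum' : ∑ γ ∈ Γ, m' γ = k := by
      rw [hs1, hm'0]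
      omega
    have hsplit : ∑ γ ∈ Γ, m γ • γ = γ0 + ∑ γ ∈ Γ, m' γ • γ := by
      rw [← Finset.add_sum_erase Γ (fun γ => m γ • γ) hγ0,
        ← Finset.add_sum_erase Γ (fun γ => m' γ • γ) hγ0]
      have hc : ∑ γ ∈ Γ.erase γ0, m' γ • γ = ∑ γ ∈ Γ.erase γ0, m γ • γ :=
        Finset.sum_congr rfl (fun γ hγ => by rw [hmm' γ hγ])
      simp only [hc, hm'0]
      have : m γ0 • γ0 = γ0 + (m γ0 - 1) • γ0 := by
        conv_lhs => rw [show m γ0 = 1 + (m γ0 - 1) by omega]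
        rw [add_nsmul, one_nsmul]
      rw [this, add_assoc]
    rw [hsplit]
    exact Set.add_mem_add hγ0 (ih m' hsum')

lemma convex_quadrant : Convex ℝ quadrant := by
  intro x hx y hy s t hs ht hst
  constructor
  · have : (s • x + t • y).1 = s * x.1 + t * y.1 := rfl
    rw [this]
    exact add_nonneg (mul_nonneg hs hx.1) (mul_nonneg ht hy.1)
  · have : (s • x + t • y).2 = s * x.2 + t * y.2 := rfl
    rw [this]
    exact add_nonneg (mul_nonneg hs hx.2) (mul_nonneg ht hy.2)

lemma isClosed_quadrant : IsClosed quadrant :=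
  IsClosed.inter (isClosed_le continuous_const continuous_fst)
    (isClosed_le continuous_const continuous_snd)

lemma saturation_sub {Γ : Finset (ℕ × ℕ)} {γ : ℕ × ℕ} (h : γ ∈ saturation Γ) :
    ∃ p ∈ convexHull ℝ (toR2 '' (Γ : Set (ℕ × ℕ))), p.1 ≤ (γ.1 : ℝ) ∧ p.2 ≤ (γ.2 : ℝ) := by
  set K := convexHull ℝ (toR2 '' (Γ : Set (ℕ × ℕ))) with hK
  have hKcompact : IsCompact K :=
    ((Γ.finite_toSet).image toR2).isCompact_convexHull ℝ
  have hclosed : IsClosed (quadrant + K) := by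
    rw [add_comm]
    exact isClosed_quadrant.add_left_of_isCompact hKcompact
  have hconv : Convex ℝ (quadrant + K) := convex_quadrant.add (convex_convexHull ℝ _)
  have hsub : closure (convexHull ℝ (quadrant + toR2 '' (Γ : Set (ℕ × ℕ)))) ⊆ quadrant + K := by
    apply closure_minimal _ hclosed
    apply convexHull_min _ hconv
    exact Set.add_subset_add_left (subset_convexHull ℝ _)
  have := hsub h
  rw [Set.mem_add] at this
  obtain ⟨q, hq, p, hp, hqp⟩ := this
  refine ⟨p, hp, ?_, ?_⟩
  · have h1 : q.1 + p.1 = (γ.1 : ℝ) := congrArg Prod.fst hqp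
    have := hq.1
    linarith
  · have h2 : q.2 + p.2 = (γ.2 : ℝ) := congrArg Prod.snd hqp
    have := hq.2
    linarith

lemma sumPow_saturation_cone (Γ : Finset (ℕ × ℕ)) (hne : Γ.Nonempty) (k : ℕ) {x : ℕ × ℕ}
    (hx : x ∈ sumPow (saturation Γ) k) :
    ∃ p ∈ convexHull ℝ (toR2 '' (Γ : Set (ℕ × ℕ))),
      (k : ℝ) * p.1 ≤ (x.1 : ℝ) ∧ (k : ℝ) * p.2 ≤ (x.2 : ℝ) := by
  induction k generalizing x with
  | zero =>
    obtain ⟨γ, hγ⟩ := hne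
    refine ⟨toR2 γ, subset_convexHull ℝ _ ⟨γ, hγ, rfl⟩, by simp, by simp⟩
  | succ k ih =>
    rw [sumPow, Set.mem_add] at hx
    obtain ⟨s, hs, y, hy, rfl⟩ := hx
    obtain ⟨ps, hps, hps1, hps2⟩ := saturation_sub hs
    obtain ⟨py, hpy, hpy1, hpy2⟩ := ih hy
    have hk1 : (0:ℝ) < (k : ℝ) + 1 := by positivity
    set c : ℝ := 1 / ((k:ℝ)+1) with hc
    refine ⟨c • ps + ((k:ℝ) * c) • py, ?_, ?_, ?_⟩
    · apply (convex_convexHull ℝ _) hps hpy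
      · positivity
      · positivity
      · rw [hc]; field_simp; ring
    · have h1 : ((s + y).1 : ℝ) = (s.1 : ℝ) + (y.1 : ℝ) := by
        push_cast [Prod.fst_add]; ring
      have hexp : ((k:ℝ)+1) * (c • ps + ((k:ℝ) * c) • py).1 = ps.1 + (k:ℝ) * py.1 := by
        have : (c • ps + ((k:ℝ) * c) • py).1 = c * ps.1 + (k:ℝ) * c * py.1 := rfl
        rw [this, hc]; field_simp; try ring
      push_cast
      rw [show ((k:ℝ)+1) = ((k:ℝ)+1) from rfl]
      calc ((k:ℝ)+1) * (c • ps + ((k:ℝ) * c) • py).1 = ps.1 + (k:ℝ) * py.1 := hexp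
        _ ≤ (s.1 : ℝ) + (y.1 : ℝ) := by linarith
        _ = ((s + y).1 : ℝ) := by rw [h1]
        _ = _ := by push_cast [Prod.fst_add]; ring
    · have h2 : ((s + y).2 : ℝ) = (s.2 : ℝ) + (y.2 : ℝ) := by
        push_cast [Prod.snd_add]; ring
      have hexp : ((k:ℝ)+1) * (c • ps + ((k:ℝ) * c) • py).2 = ps.2 + (k:ℝ) * py.2 := by
        have : (c • ps + ((k:ℝ) * c) • py).2 = c * ps.2 + (k:ℝ) * c * py.2 := rfl
        rw [this, hc]; field_simp; try ring
      push_cast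
      calc ((k:ℝ)+1) * (c • ps + ((k:ℝ) * c) • py).2 = ps.2 + (k:ℝ) * py.2 := hexp
        _ ≤ (s.2 : ℝ) + (y.2 : ℝ) := by linarith
        _ = _ := by push_cast [Prod.snd_add]; ring

end DIC

namespace DIC

lemma key_lemma (Γ : Finset (ℕ × ℕ)) (a : ℕ) (ha : (a, 0) ∈ Γ) (k : ℕ) (x : ℕ × ℕ)
    (p : ℝ × ℝ) (hp : p ∈ convexHull ℝ (toR2 '' (Γ : Set (ℕ × ℕ))))
    (h1 : (k : ℝ) * p.1 + (Γ.card * a : ℕ) ≤ (x.1 : ℝ))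
    (h2 : (k : ℝ) * p.2 ≤ (x.2 : ℝ)) :
    x ∈ upset (sumPow (↑Γ) k) := by
  have himg : toR2 '' (Γ : Set (ℕ × ℕ)) = ↑(Γ.image toR2) := by
    rw [Finset.coe_image]
  rw [himg, Finset.convexHull_eq] at hp
  obtain ⟨w, hw0, hw1, hwp⟩ := hp
  rw [Finset.centerMass_eq_of_sum_1 _ _ hw1] at hwp
  have hinj : Set.InjOn toR2 ↑Γ := toR2_inj.injOn
  -- translate sums to Γ
  set u : ℕ × ℕ → ℝ := fun γ => w (toR2 γ) with hu
  have hu0 : ∀ γ ∈ Γ, 0 ≤ u γ := fun γ hγ => hw0 _ (Finset.mem_image_of_mem toR2 hγ)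
  have hu1 : ∑ γ ∈ Γ, u γ = 1 := by
    rw [← hw1, Finset.sum_image (fun x hx y hy h => hinj hx hy h)]
  have hup : ∑ γ ∈ Γ, u γ • toR2 γ = p := by
    rw [← hwp, Finset.sum_image (fun x hx y hy h => hinj hx hy h)]
    simp
    rfl
  have hp1 : p.1 = ∑ γ ∈ Γ, u γ * (γ.1 : ℝ) := by
    rw [← hup, Prod.fst_sum]
    rfl
  have hp2 : p.2 = ∑ γ ∈ Γ, u γ * (γ.2 : ℝ) := by
    rw [← hup, Prod.snd_sum]
    rfl
  set n : ℕ × ℕ → ℕ := fun γ => ⌊(k : ℝ) * u γ⌋₊ with hn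
  have hn_le : ∀ γ ∈ Γ, (n γ : ℝ) ≤ (k : ℝ) * u γ := fun γ hγ =>
    Nat.floor_le (mul_nonneg (Nat.cast_nonneg k) (hu0 γ hγ))
  have hn_lt : ∀ γ : ℕ × ℕ, (k : ℝ) * u γ < n γ + 1 := fun γ => Nat.lt_floor_add_one _
  have hsum_le : ∑ γ ∈ Γ, n γ ≤ k := by
    have : (↑(∑ γ ∈ Γ, n γ) : ℝ) ≤ (k : ℝ) := by
      push_cast
      calc ∑ γ ∈ Γ, (n γ : ℝ) ≤ ∑ γ ∈ Γ, (k : ℝ) * u γ := Finset.sum_le_sum hn_le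
        _ = (k : ℝ) * ∑ γ ∈ Γ, u γ := by rw [Finset.mul_sum]
        _ = k := by rw [hu1, mul_one]
    exact_mod_cast this
  have hdef : k - ∑ γ ∈ Γ, n γ ≤ Γ.card := by
    have : (k : ℝ) ≤ ∑ γ ∈ Γ, n γ + Γ.card := by
      calc (k : ℝ) = (k : ℝ) * ∑ γ ∈ Γ, u γ := by rw [hu1, mul_one]
        _ = ∑ γ ∈ Γ, (k : ℝ) * u γ := by rw [Finset.mul_sum]
        _ ≤ ∑ γ ∈ Γ, ((n γ : ℝ) + 1) := Finset.sum_le_sum (fun γ _ => (hn_lt γ).le)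
        _ = ∑ γ ∈ Γ, (n γ : ℝ) + Γ.card := by rw [Finset.sum_add_distrib]; simp
        _ = _ := by push_cast; ring
    have h' : k ≤ ∑ γ ∈ Γ, n γ + Γ.card := by exact_mod_cast this
    omega
  set m : ℕ × ℕ → ℕ := fun γ => n γ + if γ = (a, 0) then k - ∑ δ ∈ Γ, n δ else 0 with hmdef
  have hm_sum : ∑ γ ∈ Γ, m γ = k := by
    rw [hmdef]
    simp only
    rw [Finset.sum_add_distrib, Finset.sum_ite_eq' Γ (a, 0) (fun _ => k - ∑ δ ∈ Γ, n δ),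
      if_pos ha]
    omega
  set s : ℕ × ℕ := ∑ γ ∈ Γ, m γ • γ with hs
  have hmem : s ∈ sumPow (↑Γ) k := sum_mem_sumPow Γ k m hm_sum
  refine ⟨s, hmem, ?_, ?_⟩
  · -- s.1 ≤ x.1
    set defc : ℕ := k - ∑ δ ∈ Γ, n δ with hdefc
    have hs1 : s.1 = ∑ γ ∈ Γ, n γ * γ.1 + defc * a := by
      rw [hs, Prod.fst_sum]
      have : ∀ γ ∈ Γ, (m γ • γ).1 = n γ * γ.1 + (if γ = (a,0) then defc * γ.1 else 0) := by
        intro γ _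
        have : (m γ • γ).1 = m γ * γ.1 := rfl
        rw [this, hmdef]
        simp only
        rw [add_mul, ite_mul, zero_mul]
      rw [Finset.sum_congr rfl this, Finset.sum_add_distrib,
        Finset.sum_ite_eq' Γ (a, 0) (fun γ => defc * γ.1), if_pos ha]
    have hcast : (s.1 : ℝ) ≤ (x.1 : ℝ) := by
      rw [hs1]
      push_cast
      have hb1 : ∑ γ ∈ Γ, (n γ : ℝ) * γ.1 ≤ (k : ℝ) * p.1 := by
        rw [hp1, Finset.mul_sum]
        refine Finset.sum_le_sum (fun γ hγ => ?_)
        rw [← mul_assoc]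
        exact mul_le_mul_of_nonneg_right (hn_le γ hγ) (Nat.cast_nonneg _)
      have hb2 : (defc : ℝ) * a ≤ (Γ.card : ℝ) * a := by
        refine mul_le_mul_of_nonneg_right ?_ (Nat.cast_nonneg _)
        exact_mod_cast hdef
      have := h1
      push_cast at this
      linarith
    exact_mod_cast hcast
  · -- s.2 ≤ x.2
    set defc : ℕ := k - ∑ δ ∈ Γ, n δ with hdefc
    have hs2 : s.2 = ∑ γ ∈ Γ, n γ * γ.2 + defc * 0 := by
      rw [hs, Prod.snd_sum]
      have : ∀ γ ∈ Γ, (m γ • γ).2 = n γ * γ.2 + (if γ = (a,0) then defc * γ.2 else 0) := by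
        intro γ _
        have : (m γ • γ).2 = m γ * γ.2 := rfl
        rw [this, hmdef]
        simp only
        rw [add_mul, ite_mul, zero_mul]
      rw [Finset.sum_congr rfl this, Finset.sum_add_distrib,
        Finset.sum_ite_eq' Γ (a, 0) (fun γ => defc * γ.2), if_pos ha]
    have hcast : (s.2 : ℝ) ≤ (x.2 : ℝ) := by
      rw [hs2]
      push_cast
      have hb1 : ∑ γ ∈ Γ, (n γ : ℝ) * γ.2 ≤ (k : ℝ) * p.2 := by
        rw [hp2, Finset.mul_sum]
        refine Finset.sum_le_sum (fun γ hγ => ?_)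
        rw [← mul_assoc]
        exact mul_le_mul_of_nonneg_right (hn_le γ hγ) (Nat.cast_nonneg _)
      linarith
    exact_mod_cast hcast

end DIC

namespace DIC

lemma upset_mono {S T : Set (ℕ × ℕ)} (h : S ⊆ T) : upset S ⊆ upset T := by
  rintro x ⟨γ, hγ, hle⟩
  exact ⟨γ, h hγ, hle⟩

lemma mem_upset_of_fst {Γ : Finset (ℕ × ℕ)} {a : ℕ} (ha : (a, 0) ∈ Γ) {k : ℕ} {x : ℕ × ℕ}
    (h : k * a ≤ x.1) : x ∈ upset (sumPow (↑Γ) k) := by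
  refine ⟨k • (a, 0), smul_mem_sumPow ha k, ?_, ?_⟩
  · simpa using h
  · simp

lemma mem_upset_of_snd {Γ : Finset (ℕ × ℕ)} {b : ℕ} (hb : (0, b) ∈ Γ) {k : ℕ} {x : ℕ × ℕ}
    (h : k * b ≤ x.2) : x ∈ upset (sumPow (↑Γ) k) := by
  refine ⟨k • (0, b), smul_mem_sumPow hb k, ?_, ?_⟩
  · simp
  · simpa using h

lemma compl_finite {Γ : Finset (ℕ × ℕ)} {a b : ℕ} (ha : (a, 0) ∈ Γ) (hb : (0, b) ∈ Γ)
    (k : ℕ) : ((upset (sumPow (↑Γ) k))ᶜ).Finite := by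
  refine Set.Finite.subset ((Set.finite_Iio (k*a)).prod (Set.finite_Iio (k*b))) ?_
  intro x hx
  simp only [Set.mem_compl_iff] at hx
  constructor
  · by_contra h
    exact hx (mem_upset_of_fst ha (by simpa using h))
  · by_contra h
    exact hx (mem_upset_of_snd hb (by simpa using h))

lemma card_diff_le (Γ : Finset (ℕ × ℕ)) (a b : ℕ) (ha : (a, 0) ∈ Γ) (hb : (0, b) ∈ Γ)
    (k : ℕ) (F_I F_J : Finset (ℕ × ℕ))
    (hFI : ↑F_I = (upset (sumPow (↑Γ) k))ᶜ)
    (hFJ : ↑F_J = (upset (sumPow (saturation Γ) k))ᶜ) :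
    F_J ⊆ F_I ∧ (F_I \ F_J).card ≤ k * b * (Γ.card * a) := by
  have hmono : upset (sumPow (↑Γ) k) ⊆ upset (sumPow (saturation Γ) k) :=
    upset_mono (sumPow_mono subset_saturation k)
  have hsub : F_J ⊆ F_I := by
    intro x hx
    rw [← Finset.mem_coe, hFJ] at hx
    rw [← Finset.mem_coe, hFI]
    exact fun hc => hx (hmono hc)
  refine ⟨hsub, ?_⟩
  set D : ℕ := Γ.card * a with hD
  set T : ℕ → Set ℕ := fun j => {i : ℕ | ∃ p ∈ convexHull ℝ (toR2 '' (Γ : Set (ℕ × ℕ))),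
    (k : ℝ) * p.1 ≤ (i : ℝ) ∧ (k : ℝ) * p.2 ≤ (j : ℝ)} with hT
  set badBand : Finset (ℕ × ℕ) := (Finset.range (k*b)).biUnion
    (fun j => (Finset.Ico (sInf (T j)) (sInf (T j) + D)).image (fun i => (i, j))) with hbad
  have hsubset : F_I \ F_J ⊆ badBand := by
    intro x hx
    rw [Finset.mem_sdiff] at hx
    obtain ⟨hxI, hxJ⟩ := hx
    rw [← Finset.mem_coe, hFI, Set.mem_compl_iff] at hxI
    have hxJ' : x ∈ upset (sumPow (saturation Γ) k) := by
      by_contra hc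
      exact hxJ (by rw [← Finset.mem_coe, hFJ]; exact hc)
    obtain ⟨s, hs, hsle⟩ := hxJ'
    obtain ⟨p, hp, hp1, hp2⟩ := sumPow_saturation_cone Γ ⟨_, ha⟩ k hs
    have hxT : x.1 ∈ T x.2 := by
      refine ⟨p, hp, ?_, ?_⟩
      · exact le_trans hp1 (by exact_mod_cast hsle.1)
      · exact le_trans hp2 (by exact_mod_cast hsle.2)
    have hj : x.2 < k * b := by
      by_contra h
      exact hxI (mem_upset_of_snd hb (by omega))
    have hmle : sInf (T x.2) ≤ x.1 := Nat.sInf_le hxT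
    have hlt : x.1 < sInf (T x.2) + D := by
      by_contra h
      push_neg at h
      obtain ⟨p', hp', hq1, hq2⟩ := Nat.sInf_mem (⟨x.1, hxT⟩ : (T x.2).Nonempty)
      refine hxI (key_lemma Γ a ha k x p' hp' ?_ hq2)
      have hcast : ((sInf (T x.2) : ℕ) : ℝ) + ((Γ.card * a : ℕ) : ℝ) ≤ (x.1 : ℝ) := by
        rw [hD] at h
        exact_mod_cast h
      push_cast
      push_cast at hq1 hcast
      linarith
    rw [hbad]
    rw [Finset.mem_biUnion]
    exact ⟨x.2, Finset.mem_range.mpr hj,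
      Finset.mem_image.mpr ⟨x.1, Finset.mem_Ico.mpr ⟨hmle, hlt⟩, Prod.mk.eta⟩⟩
  calc (F_I \ F_J).card ≤ badBand.card := Finset.card_le_card hsubset
    _ ≤ ∑ j ∈ Finset.range (k*b),
        ((Finset.Ico (sInf (T j)) (sInf (T j) + D)).image (fun i => (i, j))).card :=
      Finset.card_biUnion_le
    _ ≤ ∑ _j ∈ Finset.range (k*b), D := by
      refine Finset.sum_le_sum (fun j _ => ?_)
      calc ((Finset.Ico (sInf (T j)) (sInf (T j) + D)).image (fun i => (i, j))).card
          ≤ (Finset.Ico (sInf (T j)) (sInf (T j) + D)).card := Finset.card_image_le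
        _ = D := by rw [Nat.card_Ico]; omega
    _ = k * b * D := by rw [Finset.sum_const, smul_eq_mul, Finset.card_range]

end DIC

open DIC

/-- The colengths of the powers of a monomial ideal and of its integral closure (the
monomial ideal of the saturated exponent set) differ by `O(k)`. -/
theorem dim_integral_closure_diff_linear
    (Γ : Finset (ℕ × ℕ)) (a b : ℕ) (ha : (a, 0) ∈ Γ) (hb : (0, b) ∈ Γ) :
    monomialIdealOfSet (Γ : Set (ℕ × ℕ)) ≤ monomialIdealOfSet (saturation Γ) ∧
    ∃ C : ℝ, 0 < C ∧ ∀ k : ℕ, 1 ≤ k →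
      0 ≤ (Module.finrank ℂ
            (MvPolynomial (Fin 2) ℂ ⧸ (monomialIdealOfSet (Γ : Set (ℕ × ℕ))) ^ k) : ℝ)
          - (Module.finrank ℂ
            (MvPolynomial (Fin 2) ℂ ⧸ (monomialIdealOfSet (saturation Γ)) ^ k) : ℝ) ∧
      (Module.finrank ℂ
            (MvPolynomial (Fin 2) ℂ ⧸ (monomialIdealOfSet (Γ : Set (ℕ × ℕ))) ^ k) : ℝ)
          - (Module.finrank ℂ
            (MvPolynomial (Fin 2) ℂ ⧸ (monomialIdealOfSet (saturation Γ)) ^ k) : ℝ)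
        ≤ C * (k : ℝ) := by
  constructor
  · exact Ideal.span_mono (Set.image_mono subset_saturation)
  · set D : ℕ := Γ.card * a with hD
    refine ⟨(b : ℝ) * (D : ℝ) + 1, by positivity, ?_⟩
    intro k hk
    have hfinI := compl_finite ha hb k
    have hcomplsub : (upset (sumPow (saturation Γ) k))ᶜ ⊆ (upset (sumPow (↑Γ) k))ᶜ :=
      Set.compl_subset_compl.mpr (upset_mono (sumPow_mono subset_saturation k))
    have hfinJ : ((upset (sumPow (saturation Γ) k))ᶜ).Finite := hfinI.subset hcomplsub
    set F_I := hfinI.toFinset with hFIdef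
    set F_J := hfinJ.toFinset with hFJdef
    have hFI : ↑F_I = (upset (sumPow (↑Γ) k))ᶜ := hfinI.coe_toFinset
    have hFJ : ↑F_J = (upset (sumPow (saturation Γ) k))ᶜ := hfinJ.coe_toFinset
    have hI : Module.finrank ℂ
        (MvPolynomial (Fin 2) ℂ ⧸ (monomialIdealOfSet (Γ : Set (ℕ × ℕ))) ^ k) = F_I.card := by
      rw [monomialIdealOfSet_pow]
      exact finrank_quotient _ _ hFI
    have hJ : Module.finrank ℂ
        (MvPolynomial (Fin 2) ℂ ⧸ (monomialIdealOfSet (saturation Γ)) ^ k) = F_J.card := by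
      rw [monomialIdealOfSet_pow]
      exact finrank_quotient _ _ hFJ
    obtain ⟨hsub, hcard⟩ := card_diff_le Γ a b ha hb k F_I F_J hFI hFJ
    rw [hI, hJ]
    have hle := Finset.card_le_card hsub
    constructor
    · simp only [sub_nonneg]
      exact_mod_cast hle
    · have hcs : (F_I.card : ℝ) - (F_J.card : ℝ) = ((F_I \ F_J).card : ℝ) := by
        rw [Finset.card_sdiff_of_subset hsub, Nat.cast_sub hle]
      rw [hcs]
      have hbound : ((F_I \ F_J).card : ℝ) ≤ ((k * b * D : ℕ) : ℝ) := Nat.cast_le.mpr hcard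
      have hk1 : (1 : ℝ) ≤ (k : ℝ) := by exact_mod_cast hk
      push_cast at hbound
      nlinarith [hbound, hk1]
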